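/- Let H be a Hilbert space, V a finite-dimensional subspace of H and W a finite-dimensional subspace of H. Then H decomposes as the orthogonal direct sum of four mutually orthogonal subspaces: P_W(V), W ∩ V^⊥, P_{W^⊥}(V), and W^⊥ ∩ V^⊥, where P_W and P_{W^⊥} denote orthogonal projections onto W and W^⊥ (with closures taken where needed in infinite dimension). -/

import Mathlib

open scoped RealInnerProductSpace

/-- For finite-dimensional subspaces `V`, `W` of a Hilbert space `H`, the space `H`
decomposes as the orthogonal direct sum of the four mutually orthogonal subspaces
`P_W(V)`, `W ⊓ Vᗮ`, `P_{Wᗮ}(V)` and `Wᗮ ⊓ Vᗮ`. -/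
theorem stmt6 {H : Type*} [NormedAddCommGroup H] [InnerProductSpace ℝ H] [CompleteSpace H]
    (V W : Submodule ℝ H) [FiniteDimensional ℝ V] [FiniteDimensional ℝ W] :
    let PW : H →ₗ[ℝ] H := (W.subtypeL.comp W.orthogonalProjectionOnto).toLinearMap
    let A : Submodule ℝ H := V.map PW
    let B : Submodule ℝ H := W ⊓ Vᗮ
    let C : Submodule ℝ H := V.map (LinearMap.id - PW)
    let D : Submodule ℝ H := Wᗮ ⊓ Vᗮ
    (∀ a ∈ A, ∀ b ∈ B, ⟪a, b⟫ = 0) ∧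
    (∀ a ∈ A, ∀ c ∈ C, ⟪a, c⟫ = 0) ∧
    (∀ a ∈ A, ∀ d ∈ D, ⟪a, d⟫ = 0) ∧
    (∀ b ∈ B, ∀ c ∈ C, ⟪b, c⟫ = 0) ∧
    (∀ b ∈ B, ∀ d ∈ D, ⟪b, d⟫ = 0) ∧
    (∀ c ∈ C, ∀ d ∈ D, ⟪c, d⟫ = 0) ∧
    (A ⊔ B ⊔ C ⊔ D).topologicalClosure = ⊤ := by
  intro PW A B C D
  have hPWapp : ∀ v : H, PW v = (W.orthogonalProjectionOnto v : H) := fun _ => rfl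
  have hsubapp : ∀ v : H, (LinearMap.id - PW : H →ₗ[ℝ] H) v = v - (W.orthogonalProjectionOnto v : H) :=
    fun _ => rfl
  have hAW : A ≤ W := by
    rintro x ⟨v, hv, rfl⟩
    exact SetLike.coe_mem _
  have hCWp : C ≤ Wᗮ := by
    rintro x ⟨v, hv, rfl⟩
    rw [hsubapp]
    exact Submodule.sub_starProjection_mem_orthogonal v
  -- pairs orthogonal because one side is in W and the other in Wᗮ
  have hWWp : ∀ x ∈ W, ∀ y ∈ Wᗮ, ⟪x, y⟫ = 0 := fun x hx y hy => hy x hx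
  have hAB : ∀ a ∈ A, ∀ b ∈ B, ⟪a, b⟫ = 0 := by
    rintro a ⟨v, hv, rfl⟩ b hb
    have h1 : ⟪v, b⟫ = 0 := hb.2 v hv
    have h2 : ⟪b, v - (W.orthogonalProjectionOnto v : H)⟫ = 0 :=
      (Submodule.sub_starProjection_mem_orthogonal v) b hb.1
    have h3 : ⟪v - (W.orthogonalProjectionOnto v : H), b⟫ = 0 := by
      rw [real_inner_comm]; exact h2
    have h4 : ⟪v - (W.orthogonalProjectionOnto v : H), b⟫
        = ⟪v, b⟫ - ⟪(W.orthogonalProjectionOnto v : H), b⟫ := inner_sub_left _ _ _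
    rw [hPWapp]
    linarith
  have hCD : ∀ c ∈ C, ∀ d ∈ D, ⟪c, d⟫ = 0 := by
    rintro c ⟨v, hv, rfl⟩ d hd
    have h1 : ⟪v, d⟫ = 0 := hd.2 v hv
    have h2 : ⟪(W.orthogonalProjectionOnto v : H), d⟫ = 0 :=
      hd.1 _ (SetLike.coe_mem _)
    have h4 : ⟪v - (W.orthogonalProjectionOnto v : H), d⟫
        = ⟪v, d⟫ - ⟪(W.orthogonalProjectionOnto v : H), d⟫ := inner_sub_left _ _ _
    rw [hsubapp]
    linarith
  refine ⟨hAB, ?_, ?_, ?_, ?_, hCD, ?_⟩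
  · exact fun a ha c hc => hWWp a (hAW ha) c (hCWp hc)
  · exact fun a ha d hd => hWWp a (hAW ha) d hd.1
  · exact fun b hb c hc => hWWp b hb.1 c (hCWp hc)
  · exact fun b hb d hd => hWWp b hb.1 d hd.1
  -- the sup is everything
  have hWle : W ≤ A ⊔ B := by
    intro w hw
    have hmemB : w - (A.orthogonalProjectionOnto w : H) ∈ B := by
      refine ⟨Submodule.sub_mem _ hw (hAW (SetLike.coe_mem _)), ?_⟩
      intro v hv
      have h1 : ⟪(W.orthogonalProjectionOnto v : H), w - (A.orthogonalProjectionOnto w : H)⟫ = 0 := by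
        refine (Submodule.sub_starProjection_mem_orthogonal (K := A) w) _ ?_
        exact ⟨v, hv, rfl⟩
      have h2 : ⟪v - (W.orthogonalProjectionOnto v : H),
          w - (A.orthogonalProjectionOnto w : H)⟫ = 0 := by
        rw [real_inner_comm]
        exact (Submodule.sub_starProjection_mem_orthogonal (K := W) v) _
          (Submodule.sub_mem _ hw (hAW (SetLike.coe_mem _)))
      have h4 : ⟪v - (W.orthogonalProjectionOnto v : H), w - (A.orthogonalProjectionOnto w : H)⟫
          = ⟪v, w - (A.orthogonalProjectionOnto w : H)⟫
            - ⟪(W.orthogonalProjectionOnto v : H), w - (A.orthogonalProjectionOnto w : H)⟫ :=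
        inner_sub_left _ _ _
      linarith
    have := Submodule.add_mem_sup (SetLike.coe_mem (A.orthogonalProjectionOnto w) : _ ∈ A) hmemB
    simpa using this
  have hWple : Wᗮ ≤ C ⊔ D := by
    intro x hx
    have hmemD : x - (C.orthogonalProjectionOnto x : H) ∈ D := by
      refine ⟨Submodule.sub_mem _ hx (hCWp (SetLike.coe_mem _)), ?_⟩
      intro v hv
      have h1 : ⟪(W.orthogonalProjectionOnto v : H), x - (C.orthogonalProjectionOnto x : H)⟫ = 0 :=
        (Submodule.sub_mem _ hx (hCWp (SetLike.coe_mem _))) _ (SetLike.coe_mem _)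
      have h2 : ⟪v - (W.orthogonalProjectionOnto v : H),
          x - (C.orthogonalProjectionOnto x : H)⟫ = 0 := by
        refine (Submodule.sub_starProjection_mem_orthogonal (K := C) x) _ ?_
        exact ⟨v, hv, rfl⟩
      have h4 : ⟪v - (W.orthogonalProjectionOnto v : H), x - (C.orthogonalProjectionOnto x : H)⟫
          = ⟪v, x - (C.orthogonalProjectionOnto x : H)⟫
            - ⟪(W.orthogonalProjectionOnto v : H), x - (C.orthogonalProjectionOnto x : H)⟫ :=
        inner_sub_left _ _ _
      linarith
    have := Submodule.add_mem_sup (SetLike.coe_mem (C.orthogonalProjectionOnto x) : _ ∈ C) hmemD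
    simpa using this
  have htop : A ⊔ B ⊔ C ⊔ D = ⊤ := by
    rw [sup_assoc, eq_top_iff, ← Submodule.sup_orthogonal_of_hasOrthogonalProjection (K := W)]
    exact sup_le (hWle.trans le_sup_left) (hWple.trans le_sup_right)
  exact le_antisymm le_top (htop ▸ Submodule.le_topologicalClosure _)
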